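/- Every expansion of a weakly 4-connected graph is 3-connected. -/

import Mathlib

open SimpleGraph

universe u v

/-! ### Basic connectivity notions -/

/-- A graph is 3-connected: at least 4 vertices and deleting any ≤ 2 vertices
leaves a connected graph. -/
def ThreeConnected {V : Type u} (G : SimpleGraph V) : Prop :=
  4 ≤ Nat.card V ∧
    ∀ s : Set V, s.ncard ≤ 2 → ((⊤ : G.Subgraph).deleteVerts s).coe.Connected

/-- A separation of `G`: `A ∪ B = V(G)` and no edge between `A \ B` and `B \ A`. -/
def Separation {V : Type u} (G : SimpleGraph V) (A B : Set V) : Prop :=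
  A ∪ B = Set.univ ∧ ∀ a ∈ A \ B, ∀ b ∈ B \ A, ¬ G.Adj a b

/-- The edges of `G` induced by a vertex set `A`. -/
def inducedEdges {V : Type u} (G : SimpleGraph V) (A : Set V) : Set (Sym2 V) :=
  {e ∈ G.edgeSet | ∀ x ∈ e, x ∈ A}

/-- Weakly 4-connected: 3-connected, at least 5 vertices, and every separation of order
at most three has a side inducing at most 4 edges. -/
def WeaklyFourConnected {V : Type u} (G : SimpleGraph V) : Prop :=
  ThreeConnected G ∧ 5 ≤ Nat.card V ∧
    ∀ A B : Set V, Separation G A B → (A ∩ B).ncard ≤ 3 →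
      (inducedEdges G A).ncard ≤ 4 ∨ (inducedEdges G B).ncard ≤ 4

/-! ### Vertex splitting and expansions -/

/-- Valid data for splitting vertex `v`: `N1, N2` partition the neighborhood of `v`
with each part of size at least 2. -/
def IsValidSplitData {V : Type u} (G : SimpleGraph V) (v : V) (N1 N2 : Set V) : Prop :=
  N1 ∪ N2 = G.neighborSet v ∧ Disjoint N1 N2 ∧ 2 ≤ N1.ncard ∧ 2 ≤ N2.ncard

/-- The graph obtained by splitting vertex `v` according to the partition `N1, N2`.
The vertex `some v` plays the role of `v₁` and `none` plays the role of `v₂`;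
vertices `some a` for `a ≠ v` are the old vertices. -/
def splitGraph {V : Type u} (G : SimpleGraph V) (v : V) (N1 N2 : Set V) :
    SimpleGraph (Option V) :=
  SimpleGraph.fromRel (fun x y =>
    (∃ a b, x = some a ∧ y = some b ∧ a ≠ v ∧ b ≠ v ∧ G.Adj a b) ∨
    (x = some v ∧ ∃ b ∈ N1, y = some b) ∨
    (x = none ∧ ∃ b ∈ N2, y = some b) ∨
    (x = none ∧ y = some v))

/-- `IsExpansion G G' π newE`: `G'` is obtained from `G` by repeatedly splitting
vertices of degree at least four; `π` maps each vertex of `G'` to the vertex of `G`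
it arose from (so the branch-sets are the fibres of `π`) and `newE` is the set of
new edges created by the splits. -/
inductive IsExpansion {V : Type u} (G : SimpleGraph V) :
    {W : Type u} → SimpleGraph W → (W → V) → Set (Sym2 W) → Prop
  | refl : IsExpansion G G id ∅
  | step {W : Type u} {G' : SimpleGraph W} {π : W → V} {newE : Set (Sym2 W)}
      (h : IsExpansion G G' π newE) (v : W) (N1 N2 : Set W)
      (hs : IsValidSplitData G' v N1 N2) :
      IsExpansion G (splitGraph G' v N1 N2) (fun w => π (w.getD v))
        (Sym2.map some '' newE ∪ {s(some v, none)})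

/-! ### Minors -/

/-- `G` is isomorphic to a minor of `H`: there are disjoint nonempty connected
branch sets in `H`, one for each vertex of `G`, with edges of `G` realized by
edges of `H` between the corresponding branch sets. -/
def IsMinorOf {V : Type u} {W : Type v} (G : SimpleGraph V) (H : SimpleGraph W) : Prop :=
  ∃ f : V → Set W,
    (∀ a, (f a).Nonempty) ∧
    (∀ a, (H.induce (f a)).Connected) ∧
    (∀ a b, a ≠ b → Disjoint (f a) (f b)) ∧
    (∀ a b, G.Adj a b → ∃ x ∈ f a, ∃ y ∈ f b, H.Adj x y)

/-! ### Cycles, segments, disk systems -/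

/-- A subgraph is a cycle: nonempty, connected, and every vertex has exactly
two neighbours in it. -/
def IsCycleSub {V : Type u} {G : SimpleGraph V} (C : G.Subgraph) : Prop :=
  C.verts.Nonempty ∧ C.Connected ∧ ∀ w ∈ C.verts, (C.neighborSet w).ncard = 2

/-- A subgraph is a path: nonempty, connected, maximum degree at most two, and
some vertex of degree at most one. -/
def IsPathSub {V : Type u} {G : SimpleGraph V} (P : G.Subgraph) : Prop :=
  P.verts.Nonempty ∧ P.Connected ∧ (∀ w ∈ P.verts, (P.neighborSet w).ncard ≤ 2) ∧
    ∃ w ∈ P.verts, (P.neighborSet w).ncard ≤ 1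

/-- A segment of `G`: a maximal path (with at least one edge) all of whose internal
vertices have degree exactly two in `G`. -/
def IsSegment {V : Type u} (G : SimpleGraph V) (P : G.Subgraph) : Prop :=
  IsPathSub P ∧ P.edgeSet.Nonempty ∧
    (∀ w ∈ P.verts, (P.neighborSet w).ncard = 2 → (G.neighborSet w).ncard = 2) ∧
    (∀ w ∈ P.verts, (P.neighborSet w).ncard ≤ 1 → (G.neighborSet w).ncard ≠ 2)

/-- Axiom (D1): a cycle double cover: a set of cycles such that every edge of `G`
lies on exactly two of them. -/
def IsCDC {V : Type u} (G : SimpleGraph V) (D : Set G.Subgraph) : Prop :=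
  (∀ C ∈ D, IsCycleSub C) ∧ ∀ e ∈ G.edgeSet, {C ∈ D | e ∈ C.edgeSet}.ncard = 2

/-- Axiom (D2): at every vertex the incident edges admit a cyclic order in which
every pair of consecutive edges lies on exactly one common disk. -/
def AxiomD2 {V : Type u} (G : SimpleGraph V) (D : Set G.Subgraph) : Prop :=
  ∀ w : V, ∃ σ : Equiv.Perm (G.neighborSet w),
    (∀ x y, σ.SameCycle x y) ∧
    ∀ u : G.neighborSet w,
      {C ∈ D | s(w, (u : V)) ∈ C.edgeSet ∧ s(w, ((σ u : G.neighborSet w) : V)) ∈ C.edgeSet}.ncard = 1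

/-- Axiom (D3): any two distinct disks intersect in at most one vertex or in a segment. -/
def AxiomD3 {V : Type u} (G : SimpleGraph V) (D : Set G.Subgraph) : Prop :=
  ∀ C1 ∈ D, ∀ C2 ∈ D, C1 ≠ C2 → (C1 ⊓ C2).verts.Subsingleton ∨ IsSegment G (C1 ⊓ C2)

/-- A weak disk system: a cycle double cover satisfying (D3). -/
def IsWeakDiskSystem {V : Type u} (G : SimpleGraph V) (D : Set G.Subgraph) : Prop :=
  IsCDC G D ∧ AxiomD3 G D

/-- A disk system: a cycle double cover satisfying (D2) and (D3). -/
def IsDiskSystem {V : Type u} (G : SimpleGraph V) (D : Set G.Subgraph) : Prop :=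
  IsCDC G D ∧ AxiomD2 G D ∧ AxiomD3 G D

/-- Two vertices are confluent if a common disk contains both. -/
def ConfluentVV {V : Type u} {G : SimpleGraph V} (D : Set G.Subgraph) (x y : V) : Prop :=
  ∃ C ∈ D, x ∈ C.verts ∧ y ∈ C.verts

/-- A vertex is confluent with an edge if a common disk contains both. -/
def ConfluentVE {V : Type u} {G : SimpleGraph V} (D : Set G.Subgraph) (x : V) (e : Sym2 V) : Prop :=
  ∃ C ∈ D, x ∈ C.verts ∧ e ∈ C.edgeSet

/-- Two edges are confluent if a common disk contains both. -/
def ConfluentEE {V : Type u} {G : SimpleGraph V} (D : Set G.Subgraph) (e f : Sym2 V) : Prop :=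
  ∃ C ∈ D, e ∈ C.edgeSet ∧ f ∈ C.edgeSet

/-! ### Conforming splits -/

/-- The split of `v` along disks `D1, D2`: it is a valid split and, among the disks
through `v`, exactly `D1` and `D2` meet both `N1` and `N2`, and they intersect
precisely in `v` (axioms (S1) and (S2)). -/
def SplitConformingWith {V : Type u} (G : SimpleGraph V) (D : Set G.Subgraph) (v : V)
    (N1 N2 : Set V) (D1 D2 : G.Subgraph) : Prop :=
  IsValidSplitData G v N1 N2 ∧ D1 ∈ D ∧ D2 ∈ D ∧ D1 ≠ D2 ∧
    {C ∈ D | v ∈ C.verts ∧ (C.verts ∩ N1).Nonempty ∧ (C.verts ∩ N2).Nonempty} = {D1, D2} ∧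
    (D1 ⊓ D2).verts = {v}

/-- A conforming split (with respect to `D`). -/
def IsConformingSplit {V : Type u} (G : SimpleGraph V) (D : Set G.Subgraph) (v : V)
    (N1 N2 : Set V) : Prop :=
  ∃ D1 D2, SplitConformingWith G D v N1 N2 D1 D2

/-- A conforming split along the disk `C`. -/
def IsConformingSplitAlong {V : Type u} (G : SimpleGraph V) (D : Set G.Subgraph) (v : V)
    (N1 N2 : Set V) (C : G.Subgraph) : Prop :=
  ∃ E, SplitConformingWith G D v N1 N2 C E ∨ SplitConformingWith G D v N1 N2 E C

/-- `C'` (a cycle of the split graph) lifts the cycle `C` of `G`: contracting the new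
edge maps `C'` onto `C`. -/
def DiskLift {V : Type u} (G : SimpleGraph V) (v : V) {N1 N2 : Set V}
    (C' : (splitGraph G v N1 N2).Subgraph) (C : G.Subgraph) : Prop :=
  C.verts = (fun w : Option V => w.getD v) '' C'.verts ∧
  C.edgeSet = Sym2.map (fun w : Option V => w.getD v) '' C'.edgeSet \ {s(v, v)}

/-- The disk system induced in the split graph: the cycles that lift disks of `D`. -/
def InducedDisks {V : Type u} (G : SimpleGraph V) (D : Set G.Subgraph) (v : V)
    (N1 N2 : Set V) : Set (splitGraph G v N1 N2).Subgraph :=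
  {C' | IsCycleSub C' ∧ ∃ C ∈ D, DiskLift G v C' C}

/-- Conforming expansions, together with the induced disk system and the set of new
edges. Each successive split is conforming with respect to the disk system induced
so far. -/
inductive IsConformingExpansion {V : Type u} (G : SimpleGraph V) (D : Set G.Subgraph) :
    {W : Type u} → (G' : SimpleGraph W) → Set G'.Subgraph → Set (Sym2 W) → Prop
  | refl : IsConformingExpansion G D G D ∅
  | step {W : Type u} {G' : SimpleGraph W} {D' : Set G'.Subgraph} {newE : Set (Sym2 W)}
      (h : IsConformingExpansion G D G' D' newE) (v : W) (N1 N2 : Set W)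
      (hc : IsConformingSplit G' D' v N1 N2) :
      IsConformingExpansion G D (splitGraph G' v N1 N2) (InducedDisks G' D' v N1 N2)
        (Sym2.map some '' newE ∪ {s(some v, none)})

/-- A non-conforming expansion: a conforming expansion followed by a non-conforming
split, followed by an arbitrary further expansion. -/
def IsNonConformingExpansion {V W : Type u} (G : SimpleGraph V) (D : Set G.Subgraph)
    (H : SimpleGraph W) : Prop :=
  ∃ (W₁ : Type u) (G₁ : SimpleGraph W₁) (D₁ : Set G₁.Subgraph) (newE₁ : Set (Sym2 W₁)),
    IsConformingExpansion G D G₁ D₁ newE₁ ∧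
    ∃ (v : W₁) (N1 N2 : Set W₁), IsValidSplitData G₁ v N1 N2 ∧
      ¬ IsConformingSplit G₁ D₁ v N1 N2 ∧
      ∃ (π : W → Option W₁) (newE : Set (Sym2 W)),
        IsExpansion (splitGraph G₁ v N1 N2) H π newE

/-! ### Building blocks for the enlargement operations -/

/-- Add the edge `uv` to `G`. -/
def addE {V : Type u} (G : SimpleGraph V) (x y : V) : SimpleGraph V :=
  G ⊔ SimpleGraph.fromEdgeSet {s(x, y)}

/-- Add a new vertex (`none`) adjacent exactly to the vertices of `S`. -/
def addVertexAdj {V : Type u} (G : SimpleGraph V) (S : Set V) : SimpleGraph (Option V) :=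
  SimpleGraph.fromRel (fun x y =>
    (∃ a b, x = some a ∧ y = some b ∧ G.Adj a b) ∨ (x = none ∧ ∃ a ∈ S, y = some a))

/-- Subdivide the edge `xy` (the new vertex is `none`) and join `u` to the new vertex. -/
def subdivideJoin {V : Type u} (G : SimpleGraph V) (x y u : V) : SimpleGraph (Option V) :=
  SimpleGraph.fromRel (fun a b =>
    (∃ p q, a = some p ∧ b = some q ∧ G.Adj p q ∧ s(p, q) ≠ s(x, y)) ∨
    (a = none ∧ (b = some x ∨ b = some y ∨ b = some u)))

/-- Subdivide the edges `ab` and `cd` (new vertices `some none` and `none`) and join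
the two new vertices by an edge. -/
def doubleSubdivideJoin {V : Type u} (G : SimpleGraph V) (a b c d : V) :
    SimpleGraph (Option (Option V)) :=
  SimpleGraph.fromRel (fun p q =>
    (∃ x y, p = some (some x) ∧ q = some (some y) ∧ G.Adj x y ∧
        s(x, y) ≠ s(a, b) ∧ s(x, y) ≠ s(c, d)) ∨
    (p = some none ∧ (q = some (some a) ∨ q = some (some b))) ∨
    (p = none ∧ (q = some (some c) ∨ q = some (some d) ∨ q = some none)))

/-- `a, b, c, d` occur on the cycle `C` in this cyclic order (in one of the two
orientations): `{a,c}` separates `b` from `d` on `C` and vice versa. -/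
def CyclicOrderOn {V : Type u} {G : SimpleGraph V} (C : G.Subgraph) (a b c d : V) : Prop :=
  a ∈ C.verts ∧ b ∈ C.verts ∧ c ∈ C.verts ∧ d ∈ C.verts ∧
  [a, b, c, d].Nodup ∧
  (∀ (hb : b ∈ (C.deleteVerts {a, c}).verts) (hd : d ∈ (C.deleteVerts {a, c}).verts),
    ¬ (C.deleteVerts {a, c}).coe.Reachable ⟨b, hb⟩ ⟨d, hd⟩) ∧
  (∀ (ha : a ∈ (C.deleteVerts {b, d}).verts) (hc : c ∈ (C.deleteVerts {b, d}).verts),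
    ¬ (C.deleteVerts {b, d}).coe.Reachable ⟨a, ha⟩ ⟨c, hc⟩)

/-! ### The enlargement operations, phrased as "H has a minor isomorphic to a
type-i enlargement of G with respect to D" -/

/-- Type 1 (non-conforming jump). -/
def HasType1Minor {V : Type u} {U : Type v} (G : SimpleGraph V) (D : Set G.Subgraph)
    (H : SimpleGraph U) : Prop :=
  ∃ x y : V, x ≠ y ∧ ¬ ConfluentVV D x y ∧ IsMinorOf (addE G x y) H

/-- Type 2 (cross). -/
def HasType2Minor {V : Type u} {U : Type v} (G : SimpleGraph V) (D : Set G.Subgraph)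
    (H : SimpleGraph U) : Prop :=
  ∃ C ∈ D, ∃ a b c d : V, CyclicOrderOn C a b c d ∧
    IsMinorOf (addE (addE G a c) b d) H

/-- Type 3 (non-conforming split). -/
def HasType3Minor {V : Type u} {U : Type v} (G : SimpleGraph V) (D : Set G.Subgraph)
    (H : SimpleGraph U) : Prop :=
  ∃ (w : V) (N1 N2 : Set V), IsValidSplitData G w N1 N2 ∧
    ¬ IsConformingSplit G D w N1 N2 ∧ IsMinorOf (splitGraph G w N1 N2) H

/-- Type 4 (split + non-conforming jump). In `splitGraph G v N1 N2` the vertices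
`some v` and `none` play the roles of `v₁` and `v₂`. -/
def HasType4Minor {V : Type u} {U : Type v} (G : SimpleGraph V) (D : Set G.Subgraph)
    (H : SimpleGraph U) : Prop :=
  ∃ C ∈ D, ∃ x w : V, x ∈ C.verts ∧ w ∈ C.verts ∧ ¬ G.Adj x w ∧ x ≠ w ∧
    ∃ N1 N2 : Set V, IsConformingSplit G D w N1 N2 ∧
      ¬ ConfluentVV (InducedDisks G D w N1 N2) (some x) none ∧
      IsMinorOf (addE (splitGraph G w N1 N2) (some x) none) H

/-- Type 5 (double split + non-conforming jump). -/
def HasType5Minor {V : Type u} {U : Type v} (G : SimpleGraph V) (D : Set G.Subgraph)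
    (H : SimpleGraph U) : Prop :=
  ∃ x w : V, G.Adj x w ∧ ∃ C1 ∈ D, ∃ C2 ∈ D, C1 ≠ C2 ∧
    s(x, w) ∈ C1.edgeSet ∧ s(x, w) ∈ C2.edgeSet ∧
    ∃ M1 M2 : Set V, IsConformingSplitAlong G D x M1 M2 C1 ∧ w ∈ M1 ∧
    ∃ C2' ∈ InducedDisks G D x M1 M2, DiskLift G x C2' C2 ∧
    ∃ P1 P2 : Set (Option V),
      IsConformingSplitAlong (splitGraph G x M1 M2) (InducedDisks G D x M1 M2)
        (some w) P1 P2 C2' ∧ (some x) ∈ P1 ∧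
      IsMinorOf (addE (splitGraph (splitGraph G x M1 M2) (some w) P1 P2)
        (some none) none) H

/-- Type 6 (split + cross). -/
def HasType6Minor {V : Type u} {U : Type v} (G : SimpleGraph V) (D : Set G.Subgraph)
    (H : SimpleGraph U) : Prop :=
  ∃ C ∈ D, ∃ x w z : V, x ∈ C.verts ∧ w ∈ C.verts ∧ z ∈ C.verts ∧
    ¬ G.Adj x w ∧ ¬ G.Adj x z ∧ w ≠ z ∧ x ≠ w ∧ x ≠ z ∧
    ∃ N1 N2 : Set V, IsConformingSplitAlong G D x N1 N2 C ∧
    ∃ C' ∈ InducedDisks G D x N1 N2, DiskLift G x C' C ∧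
      CyclicOrderOn C' (some x) none (some w) (some z) ∧
      IsMinorOf (addE (addE (splitGraph G x N1 N2) (some x) (some w)) none (some z)) H

/-- Type 7 (double split + cross). -/
def HasType7Minor {V : Type u} {U : Type v} (G : SimpleGraph V) (D : Set G.Subgraph)
    (H : SimpleGraph U) : Prop :=
  ∃ C ∈ D, ∃ x w : V, x ∈ C.verts ∧ w ∈ C.verts ∧ ¬ G.Adj x w ∧ x ≠ w ∧
    ∃ M1 M2 : Set V, IsConformingSplitAlong G D x M1 M2 C ∧
    ∃ C' ∈ InducedDisks G D x M1 M2, DiskLift G x C' C ∧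
    ∃ P1 P2 : Set (Option V),
      IsConformingSplitAlong (splitGraph G x M1 M2) (InducedDisks G D x M1 M2)
        (some w) P1 P2 C' ∧
    ∃ C'' ∈ InducedDisks (splitGraph G x M1 M2) (InducedDisks G D x M1 M2) (some w) P1 P2,
      DiskLift (splitGraph G x M1 M2) (some w) C'' C' ∧
      CyclicOrderOn C'' (some (some x)) (some none) (some (some w)) none ∧
      IsMinorOf (addE (addE (splitGraph (splitGraph G x M1 M2) (some w) P1 P2)
        (some (some x)) (some (some w))) (some none) none) H

/-- Weak type 8 (weak triad): add a vertex adjacent to three vertices not all on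
a common disk. -/
def HasWeakType8Minor {V : Type u} {U : Type v} (G : SimpleGraph V) (D : Set G.Subgraph)
    (H : SimpleGraph U) : Prop :=
  ∃ x1 x2 x3 : V, x1 ≠ x2 ∧ x1 ≠ x3 ∧ x2 ≠ x3 ∧
    (¬ ∃ C ∈ D, x1 ∈ C.verts ∧ x2 ∈ C.verts ∧ x3 ∈ C.verts) ∧
    IsMinorOf (addVertexAdj G {x1, x2, x3}) H

/-- Type 8 (non-separating triad). -/
def HasType8Minor {V : Type u} {U : Type v} (G : SimpleGraph V) (D : Set G.Subgraph)
    (H : SimpleGraph U) : Prop :=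
  ∃ x1 x2 x3 : V, x1 ≠ x2 ∧ x1 ≠ x3 ∧ x2 ≠ x3 ∧
    ConfluentVV D x1 x2 ∧ ConfluentVV D x1 x3 ∧ ConfluentVV D x2 x3 ∧
    (¬ ∃ C ∈ D, x1 ∈ C.verts ∧ x2 ∈ C.verts ∧ x3 ∈ C.verts) ∧
    ¬ G.Adj x1 x2 ∧ ¬ G.Adj x1 x3 ∧ ¬ G.Adj x2 x3 ∧
    ((⊤ : G.Subgraph).deleteVerts {x1, x2, x3}).coe.Connected ∧
    IsMinorOf (addVertexAdj G {x1, x2, x3}) H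

/-- Weak type 9 (weak non-conforming T-edge). -/
def HasWeakType9Minor {V : Type u} {U : Type v} (G : SimpleGraph V) (D : Set G.Subgraph)
    (H : SimpleGraph U) : Prop :=
  ∃ x y z : V, G.Adj x y ∧ ¬ ConfluentVE D z s(x, y) ∧
    IsMinorOf (subdivideJoin G x y z) H

/-- Type 9 (non-conforming T-edge). -/
def HasType9Minor {V : Type u} {U : Type v} (G : SimpleGraph V) (D : Set G.Subgraph)
    (H : SimpleGraph U) : Prop :=
  ∃ x y z : V, G.Adj x y ∧ ¬ ConfluentVE D z s(x, y) ∧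
    ConfluentVV D z x ∧ ConfluentVV D z y ∧ ¬ G.Adj z x ∧ ¬ G.Adj z y ∧
    ((⊤ : G.Subgraph).deleteVerts {z, x, y}).coe.Connected ∧
    IsMinorOf (subdivideJoin G x y z) H

/-! ### Prism, peripheral cycles, planarity -/

/-- The prism: the complement of a 6-cycle on six vertices. -/
def prismGraph : SimpleGraph (Fin 6) :=
  (SimpleGraph.fromRel (fun i j : Fin 6 => j = i + 1))ᶜ

def IsPrism {V : Type u} (G : SimpleGraph V) : Prop :=
  Nonempty (G ≃g prismGraph)

/-- A peripheral cycle: an induced cycle whose deletion leaves a connected graph. -/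
def IsPeripheral {V : Type u} (G : SimpleGraph V) (C : G.Subgraph) : Prop :=
  IsCycleSub C ∧ C.IsInduced ∧ ((⊤ : G.Subgraph).deleteVerts C.verts).coe.Connected

/-- The set of all peripheral cycles of `G`. -/
def peripheralDisks {V : Type u} (G : SimpleGraph V) : Set G.Subgraph :=
  {C | IsPeripheral G C}

/-- Planarity, encoded via Wagner's theorem: no `K₅` and no `K₃,₃` minor. -/
def IsPlanar {V : Type u} (G : SimpleGraph V) : Prop :=
  ¬ IsMinorOf (completeGraph (Fin 5)) G ∧
  ¬ IsMinorOf (completeBipartiteGraph (Fin 3) (Fin 3)) G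

/-- Type 10 (the enlargement of a prism, i.e. `V₈`). -/
def HasType10Minor {V : Type u} {U : Type v} (G : SimpleGraph V) (H : SimpleGraph U) : Prop :=
  IsPrism G ∧ ∃ a b c d : V, G.Adj a b ∧ G.Adj c d ∧ s(a, b) ≠ s(c, d) ∧
    (∃ t, G.Adj a t ∧ G.Adj b t) ∧ (∃ t, G.Adj c t ∧ G.Adj d t) ∧
    (¬ ∃ C : G.Subgraph, IsPeripheral G C ∧ s(a, b) ∈ C.edgeSet ∧ s(c, d) ∈ C.edgeSet) ∧
    IsMinorOf (doubleSubdivideJoin G a b c d) H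

/-! ### Subdivisions -/

/-- Data witnessing that `S` is (isomorphic to) a subdivision of `Gb`:
an injection `f` of branch-vertices together with internally disjoint paths of `S`,
one for each edge of `Gb`, covering `S`. -/
structure SubdivisionData {V : Type u} {W : Type v} (S : SimpleGraph V)
    (Gb : SimpleGraph W) where
  f : W → V
  path : ∀ a b : W, Gb.Adj a b → S.Walk (f a) (f b)
  inj : Function.Injective f
  isPath : ∀ a b hab, (path a b hab).IsPath
  symmSupport : ∀ a b (hab : Gb.Adj a b),
    (path b a hab.symm).support = (path a b hab).support.reverse
  interDisj : ∀ a b hab c d hcd, s(a, b) ≠ s(c, d) →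
    ∀ x, x ∈ (path a b hab).support → x ∈ (path c d hcd).support → x ∈ Set.range f
  branchOnPath : ∀ a b hab (w : W), f w ∈ (path a b hab).support → w = a ∨ w = b
  coverV : ∀ x : V, x ∈ Set.range f ∨ ∃ a b hab, x ∈ (path a b hab).support
  coverE : ∀ e ∈ S.edgeSet, ∃ a b hab, e ∈ (path a b hab).edges

/-- `G` is a subdivision of `Gb`. -/
def IsSubdivisionOf {V : Type u} {W : Type v} (S : SimpleGraph V) (Gb : SimpleGraph W) : Prop :=
  Nonempty (SubdivisionData S Gb)

/-- The cycle of the subdivision corresponding to a cycle `C` of the base graph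
(the union of the paths replacing the edges of `C`). -/
def SubdivisionData.inducedDisk {V : Type u} {W : Type v} {S : SimpleGraph V}
    {Gb : SimpleGraph W} (sd : SubdivisionData S Gb) (C : Gb.Subgraph) : S.Subgraph where
  verts := {x | ∃ (a b : W) (hC : C.Adj a b), x ∈ (sd.path a b (C.adj_sub hC)).support}
  Adj x y := ∃ (a b : W) (hC : C.Adj a b), s(x, y) ∈ (sd.path a b (C.adj_sub hC)).edges
  adj_sub := by
    rintro x y ⟨a, b, hC, he⟩
    exact (SimpleGraph.mem_edgeSet S).mp ((sd.path a b (C.adj_sub hC)).edges_subset_edgeSet he)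
  edge_vert := by
    rintro x y ⟨a, b, hC, he⟩
    exact ⟨a, b, hC, SimpleGraph.Walk.fst_mem_support_of_mem_edges _ he⟩
  symm := by
    constructor
    rintro x y ⟨a, b, hC, he⟩
    exact ⟨a, b, hC, by rwa [Sym2.eq_swap]⟩

/-- The weak disk system induced in the subdivision by a system of the base graph. -/
def SubdivisionData.inducedDisks {V : Type u} {W : Type v} {S : SimpleGraph V}
    {Gb : SimpleGraph W} (sd : SubdivisionData S Gb) (D : Set Gb.Subgraph) :
    Set S.Subgraph :=
  sd.inducedDisk '' D

/-! ### Bridges and locally planar extensions -/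

/-- `B` is an `S`-bridge of `H`: either a single edge of `H` not in `S` with both ends
in `S`, or a component of `H − V(S)` together with all edges to `S`. -/
def IsBridgeOf {U : Type u} {H : SimpleGraph U} (S B : H.Subgraph) : Prop :=
  (∃ x y : U, H.Adj x y ∧ s(x, y) ∉ S.edgeSet ∧ x ∈ S.verts ∧ y ∈ S.verts ∧
      B.verts = {x, y} ∧ ∀ p q, B.Adj p q ↔ s(p, q) = s(x, y)) ∨
  (∃ J : Set U, J.Nonempty ∧ J ∩ S.verts = ∅ ∧
    (∀ x ∈ J, ∀ y, H.Adj x y → y ∉ S.verts → y ∈ J) ∧ (H.induce J).Connected ∧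
    B.verts = J ∪ {y ∈ S.verts | ∃ x ∈ J, H.Adj x y} ∧
    ∀ p q, B.Adj p q ↔ (H.Adj p q ∧ (p ∈ J ∨ q ∈ J)))

/-- The induced system `D` (of cycles of `S.coe`) is locally planar in `H`:
every bridge attaches to a single disk, and for each disk the union of the disk
with its bridges has a planar drawing with the disk bounding the unbounded face
(encoded: adding an apex vertex joined to the disk keeps the graph planar). -/
def LocallyPlanar {U : Type u} (H : SimpleGraph U) (S : H.Subgraph)
    (D : Set S.coe.Subgraph) : Prop :=
  ∃ φ : H.Subgraph → S.coe.Subgraph,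
    (∀ B, IsBridgeOf S B → φ B ∈ D ∧
      ∀ x ∈ B.verts ∩ S.verts, x ∈ Subtype.val '' (φ B).verts) ∧
    ∀ C ∈ D, IsPlanar (addVertexAdj
      ((SimpleGraph.Subgraph.coeSubgraph C ⊔
        ⨆ B ∈ {B : H.Subgraph | IsBridgeOf S B ∧ φ B = C}, B).coe)
      {x | (x : U) ∈ Subtype.val '' C.verts})

/-- The disk system `D` of `G` has a locally planar extension into `H`. -/
def HasLocallyPlanarExtension {V U : Type u} (G : SimpleGraph V) (D : Set G.Subgraph)
    (H : SimpleGraph U) : Prop :=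
  ∃ (W : Type u) (G' : SimpleGraph W) (D' : Set G'.Subgraph) (newE : Set (Sym2 W)),
    IsConformingExpansion G D G' D' newE ∧
    ∃ (S : H.Subgraph) (sd : SubdivisionData S.coe G'),
      LocallyPlanar H S (sd.inducedDisks D')

/-! ### Degenerate separations -/

/-- A degenerate separation of order three. -/
def Degenerate {V : Type u} (G : SimpleGraph V) (A B : Set V) : Prop :=
  ((A \ B).ncard = 1 ∧ ∀ x ∈ A ∩ B, ∀ y ∈ A ∩ B, ¬ G.Adj x y) ∨
  (∃ v1 v2 v3 u1 u2 u3 : V, A ∩ B = {v1, v2, v3} ∧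
    v1 ≠ v2 ∧ v1 ≠ v3 ∧ v2 ≠ v3 ∧
    u1 ∈ A ∧ u2 ∈ A ∧ u3 ∈ A ∧ G.Adj u1 u2 ∧ G.Adj u1 u3 ∧ G.Adj u2 u3 ∧
    (u1 = v1 ∨ G.Adj u1 v1) ∧ (u2 = v2 ∨ G.Adj u2 v2) ∧ (u3 = v3 ∨ G.Adj u3 v3) ∧
    A ⊆ {u1, u2, u3, v1, v2, v3} ∧
    ∀ x ∈ A, ∀ y ∈ A, G.Adj x y →
      s(x, y) ∈ ({s(u1, v1), s(u2, v2), s(u3, v3),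
                  s(u1, u2), s(u1, u3), s(u2, u3)} : Set (Sym2 V)))

/-! ### Auxiliary lemmas for the proof -/

section SplitAux

variable {W : Type u} {G' : SimpleGraph W} {v : W} {N1 N2 : Set W}

lemma splitGraph_adj_old {a b : W} (ha : a ≠ v) (hb : b ≠ v) (hab : G'.Adj a b) :
    (splitGraph G' v N1 N2).Adj (some a) (some b) := by
  unfold splitGraph
  rw [SimpleGraph.fromRel_adj]
  exact ⟨by simpa using hab.ne, Or.inl (Or.inl ⟨a, b, rfl, rfl, ha, hb, hab⟩)⟩

lemma splitGraph_adj_v1 {b : W} (hb : b ∈ N1) (hvb : v ≠ b) :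
    (splitGraph G' v N1 N2).Adj (some v) (some b) := by
  unfold splitGraph
  rw [SimpleGraph.fromRel_adj]
  exact ⟨by simpa using hvb, Or.inl (Or.inr (Or.inl ⟨rfl, b, hb, rfl⟩))⟩

lemma splitGraph_adj_v2 {b : W} (hb : b ∈ N2) :
    (splitGraph G' v N1 N2).Adj none (some b) := by
  unfold splitGraph
  rw [SimpleGraph.fromRel_adj]
  exact ⟨by simp, Or.inl (Or.inr (Or.inr (Or.inl ⟨rfl, b, hb, rfl⟩)))⟩

lemma splitGraph_adj_none_v :
    (splitGraph G' v N1 N2).Adj none (some v) := by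
  unfold splitGraph
  rw [SimpleGraph.fromRel_adj]
  exact ⟨by simp, Or.inl (Or.inr (Or.inr (Or.inr ⟨rfl, rfl⟩)))⟩

end SplitAux

theorem split_threeConnected {W : Type u} [Finite W] {G' : SimpleGraph W}
    (h3 : ThreeConnected G') {v : W} {N1 N2 : Set W}
    (hs : IsValidSplitData G' v N1 N2) :
    ThreeConnected (splitGraph G' v N1 N2) := by
  classical
  haveI := Fintype.ofFinite W
  obtain ⟨hcard, hconn⟩ := h3
  have hcardO : Nat.card (Option W) = Nat.card W + 1 := Finite.card_option
  refine ⟨by omega, ?_⟩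
  intro s hscard
  set H := splitGraph G' v N1 N2 with hH
  set K := ((⊤ : H.Subgraph).deleteVerts s) with hK
  set t : Set W := {a | some a ∈ s ∨ (a = v ∧ none ∈ s)} with htdef
  have hmemt : ∀ a : W, a ∈ t ↔ (some a ∈ s ∨ (a = v ∧ none ∈ s)) := fun a => Iff.rfl
  have ht_not : ∀ a : W, a ∉ t → some a ∉ s ∧ (a = v → none ∉ s) := by
    intro a hat
    exact ⟨fun h => hat ((hmemt a).mpr (Or.inl h)),
           fun hav h => hat ((hmemt a).mpr (Or.inr ⟨hav, h⟩))⟩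
  have htcard : t.ncard ≤ 2 := by
    refine le_trans (Set.ncard_le_ncard_of_injOn
      (fun a => if some a ∈ s then some a else none) ?_ ?_ (Set.toFinite s)) hscard
    · intro a hat
      show (if some a ∈ s then some a else none) ∈ s
      by_cases h : some a ∈ s
      · rw [if_pos h]; exact h
      · rw [if_neg h]
        rcases (hmemt a).mp hat with h' | h'
        · exact absurd h' h
        · exact h'.2
    · intro a ha b hb hab
      replace hab : (if some a ∈ s then some a else (none : Option W)) =
          (if some b ∈ s then some b else none) := hab
      by_cases h1 : some a ∈ s <;> by_cases h2 : some b ∈ s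
      · rw [if_pos h1, if_pos h2] at hab; exact Option.some.inj hab
      · rw [if_pos h1, if_neg h2] at hab; exact absurd hab (by simp)
      · rw [if_neg h1, if_pos h2] at hab; exact absurd hab (by simp)
      · have hav : a = v := by
          rcases (hmemt a).mp ha with h' | h'
          · exact absurd h' h1
          · exact h'.1
        have hbv : b = v := by
          rcases (hmemt b).mp hb with h' | h'
          · exact absurd h' h2
          · exact h'.1
        rw [hav, hbv]
  have memK : ∀ x : Option W, x ∉ s → x ∈ K.verts := fun x hx => ⟨Set.mem_univ x, hx⟩
  have kadj : ∀ {x y : Option W} (hx : x ∈ K.verts) (hy : y ∈ K.verts),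
      H.Adj x y → K.coe.Adj ⟨x, hx⟩ ⟨y, hy⟩ := by
    intro x y hx hy hadj
    rw [SimpleGraph.Subgraph.coe_adj]
    exact SimpleGraph.Subgraph.deleteVerts_adj.mpr
      ⟨Set.mem_univ x, hx.2, Set.mem_univ y, hy.2, hadj⟩
  -- one step of the lift
  have step : ∀ (a c : W) (ha : some a ∈ K.verts) (hc : some c ∈ K.verts),
      a ∉ t → c ∉ t → G'.Adj a c → K.coe.Reachable ⟨some a, ha⟩ ⟨some c, hc⟩ := by
    intro a c ha hc hat hct hac
    by_cases hav : a = v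
    · subst hav
      have hcn : c ∈ N1 ∪ N2 := by rw [hs.1]; exact hac
      rcases hcn with h1 | h2
      · exact (kadj ha hc (splitGraph_adj_v1 h1 hac.ne)).reachable
      · have hnone : (none : Option W) ∈ K.verts := memK _ ((ht_not a hat).2 rfl)
        exact ((kadj ha hnone splitGraph_adj_none_v.symm).reachable).trans
          ((kadj hnone hc (splitGraph_adj_v2 h2)).reachable)
    · by_cases hcv : c = v
      · subst hcv
        have han : a ∈ N1 ∪ N2 := by rw [hs.1]; exact hac.symm
        rcases han with h1 | h2
        · exact (kadj ha hc (splitGraph_adj_v1 h1 hac.symm.ne).symm).reachable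
        · have hnone : (none : Option W) ∈ K.verts := memK _ ((ht_not c hct).2 rfl)
          exact ((kadj ha hnone (splitGraph_adj_v2 h2).symm).reachable).trans
            ((kadj hnone hc splitGraph_adj_none_v).reachable)
      · exact (kadj ha hc (splitGraph_adj_old hav hcv hac)).reachable
  -- lift a walk of G' avoiding t
  have lift : ∀ (a b : W) (p : G'.Walk a b), (∀ x ∈ p.support, x ∉ t) →
      ∀ (ha : some a ∈ K.verts) (hb : some b ∈ K.verts),
        K.coe.Reachable ⟨some a, ha⟩ ⟨some b, hb⟩ := by
    intro a b p
    induction p with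
    | nil => intro _ _ _; exact SimpleGraph.Reachable.refl _
    | @cons a c b hac q ih =>
      intro hp ha hb
      have hat : a ∉ t := hp a (SimpleGraph.Walk.start_mem_support _)
      have hct : c ∉ t := hp c (by
        rw [SimpleGraph.Walk.support_cons]
        exact List.mem_cons_of_mem _ q.start_mem_support)
      have hc : some c ∈ K.verts := memK _ (ht_not c hct).1
      refine (step a c ha hc hat hct hac).trans (ih ?_ hc hb)
      intro x hx
      exact hp x (by rw [SimpleGraph.Walk.support_cons]; exact List.mem_cons_of_mem _ hx)
  -- connect lifted vertices using 3-connectivity of G'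
  have connect : ∀ (a b : W) (ha : a ∉ t) (hb : b ∉ t),
      K.coe.Reachable ⟨some a, memK _ (ht_not a ha).1⟩ ⟨some b, memK _ (ht_not b hb).1⟩ := by
    intro a b ha hb
    have hGt := hconn t htcard
    obtain ⟨q⟩ := hGt.preconnected ⟨a, Set.mem_univ a, ha⟩ ⟨b, Set.mem_univ b, hb⟩
    have hp : ∀ x ∈ (q.map ((⊤ : G'.Subgraph).deleteVerts t).hom).support, x ∉ t := by
      intro x hx
      rw [SimpleGraph.Walk.support_map, List.mem_map] at hx
      obtain ⟨⟨y, hy⟩, _, rfl⟩ := hx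
      exact hy.2
    exact lift a b (q.map ((⊤ : G'.Subgraph).deleteVerts t).hom) hp _ _
  -- if v got deleted, each part of the split still has a surviving neighbour
  have hNt : ∀ N : Set W, 2 ≤ N.ncard → N ⊆ G'.neighborSet v → v ∈ t →
      ∃ c ∈ N, c ∉ t := by
    intro N hN hNsub hvt
    by_contra hcon
    push_neg at hcon
    have hsub : N ⊆ t \ {v} := by
      intro c hcN
      refine ⟨hcon c hcN, ?_⟩
      intro h
      exact G'.irrefl ((Set.mem_singleton_iff.mp h) ▸ (hNsub hcN))
    have h1 : N.ncard ≤ (t \ {v}).ncard := Set.ncard_le_ncard hsub (Set.toFinite _)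
    have h2 : (t \ {v}).ncard < t.ncard :=
      Set.ncard_diff_singleton_lt_of_mem hvt (Set.toFinite _)
    omega
  -- every surviving vertex reaches a lifted old vertex
  have route : ∀ (x : Option W) (hx : x ∈ K.verts), ∃ (a : W) (ha : a ∉ t),
      K.coe.Reachable ⟨x, hx⟩ ⟨some a, memK _ (ht_not a ha).1⟩ := by
    intro x hx
    cases x with
    | none =>
      by_cases hvt : v ∈ t
      · obtain ⟨c, hcN2, hct⟩ := hNt N2 hs.2.2.2 (hs.1 ▸ Set.subset_union_right) hvt
        exact ⟨c, hct, (kadj hx _ (splitGraph_adj_v2 hcN2)).reachable⟩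
      · exact ⟨v, hvt, (kadj hx _ splitGraph_adj_none_v).reachable⟩
    | some a =>
      by_cases hat : a ∈ t
      · have hav : a = v := by
          rcases (hmemt a).mp hat with h' | h'
          · exact absurd h' hx.2
          · exact h'.1
        subst hav
        obtain ⟨c, hcN1, hct⟩ := hNt N1 hs.2.2.1 (hs.1 ▸ Set.subset_union_left) hat
        have hvc : a ≠ c := by
          intro h
          exact G'.irrefl (h ▸ ((hs.1 ▸ Set.subset_union_left) hcN1))
        exact ⟨c, hct, (kadj hx _ (splitGraph_adj_v1 hcN1 hvc)).reachable⟩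
      · exact ⟨a, hat, SimpleGraph.Reachable.refl _⟩
  -- conclude
  have hKne : K.verts.Nonempty := by
    have hsne : s ≠ Set.univ := by
      intro h
      rw [h, Set.ncard_univ] at hscard
      omega
    obtain ⟨x, hxs⟩ := (Set.ne_univ_iff_exists_notMem s).mp hsne
    exact ⟨x, memK x hxs⟩
  rw [SimpleGraph.connected_iff]
  constructor
  · rintro ⟨x, hx⟩ ⟨y, hy⟩
    obtain ⟨a, ha, rx⟩ := route x hx
    obtain ⟨b, hb, ry⟩ := route y hy
    exact rx.trans ((connect a b ha hb).trans ry.symm)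
  · obtain ⟨x, hx⟩ := hKne
    exact ⟨⟨x, hx⟩⟩

lemma ThreeConnected.finite {X : Type u} {G : SimpleGraph X} (h : ThreeConnected G) :
    Finite X := Nat.finite_of_card_ne_zero (by have := h.1; omega)

theorem expansion_threeConnected_aux {V : Type u} {G : SimpleGraph V}
    (h3 : ThreeConnected G) {W : Type u} {G' : SimpleGraph W} {π : W → V}
    {newE : Set (Sym2 W)} (h : IsExpansion G G' π newE) :
    ThreeConnected G' := by
  induction h with
  | refl => exact h3
  | step h v N1 N2 hsplit ih =>
    haveI := ih.finite
    exact split_threeConnected ih hsplit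

/-- every expansion of a weakly 4-connected graph is 3-connected. -/
theorem expansion_threeConnected {V W : Type u} [Fintype V] [Fintype W]
    (G : SimpleGraph V) (hG : WeaklyFourConnected G)
    (G' : SimpleGraph W) (π : W → V) (newE : Set (Sym2 W))
    (h : IsExpansion G G' π newE) :
    ThreeConnected G' := by
  exact expansion_threeConnected_aux hG.1 h
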